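/- arXiv:1304.6593 — 3 statements merged into one kernel-verified Lean document; each statement's English description precedes it below -/
import Mathlib

section
/- Let (V,E) be a multigraph and F a finite multiset of unordered pairs of distinct nodes of V such that (V, E ∪ F) is 2-edge-connected. Suppose F contains two parallel links e₁ and e₂, both with endpoints x and y, and suppose x and y lie in the same connected component of (V,E). Then (V, E ∪ (F minus one copy of e₁)) is also 2-edge-connected. -/
open scoped Classical

/-- The number of edges of the edge multiset `Es` (counted with multiplicity)
with exactly one endpoint in `X`. -/
noncomputable def cutDeg {V : Type*} (Es : Multiset (Sym2 V)) (X : Finset V) : ℕ :=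
  Multiset.card (Es.filter (fun e => ∃ u v, e = s(u, v) ∧ u ∈ X ∧ v ∉ X))

/-- The multigraph `(V, Es)` is `k`-edge-connected. -/
def KEdgeConnected {V : Type*} [Fintype V] (Es : Multiset (Sym2 V)) (k : ℕ) : Prop :=
  2 ≤ Fintype.card V ∧
    ∀ X : Finset V, X ≠ ∅ → X ≠ Finset.univ → k ≤ cutDeg Es X

/-- The simple graph underlying a multiset of edges: `u` and `v` are adjacent iff they
are distinct and joined by at least one edge. -/
def toSimple {V : Type*} (Es : Multiset (Sym2 V)) : SimpleGraph V where
  Adj u v := u ≠ v ∧ s(u, v) ∈ Es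
  symm := by
    constructor
    intro u v h
    exact ⟨h.1.symm, by rw [Sym2.eq_swap]; exact h.2⟩
  loopless := by constructor; intro v h; exact h.1 rfl

lemma cross_of_walk {V : Type*} (E : Multiset (Sym2 V)) (X : Finset V) :
    ∀ {a b : V}, (toSimple E).Walk a b → a ∈ X → b ∉ X →
    ∃ u v, s(u, v) ∈ E ∧ u ∈ X ∧ v ∉ X := by
  intro a b w
  induction w with
  | nil => intro ha hb; exact absurd ha hb
  | @cons u v c h p ih =>
    intro ha hb
    by_cases hv : v ∈ X
    · exact ih hv hb
    · exact ⟨u, v, h.2, ha, hv⟩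

lemma cutDeg_add {V : Type*} (A B : Multiset (Sym2 V)) (X : Finset V) :
    cutDeg (A + B) X = cutDeg A X + cutDeg B X := by
  simp [cutDeg, Multiset.filter_add]

lemma one_le_cutDeg {V : Type*} (A : Multiset (Sym2 V)) (X : Finset V)
    {u v : V} (h : s(u, v) ∈ A) (hu : u ∈ X) (hv : v ∉ X) :
    1 ≤ cutDeg A X := by
  have : s(u, v) ∈ A.filter (fun e => ∃ u v, e = s(u, v) ∧ u ∈ X ∧ v ∉ X) :=
    Multiset.mem_filter.mpr ⟨h, u, v, rfl, hu, hv⟩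
  have := Multiset.card_pos_iff_exists_mem.mpr ⟨_, this⟩
  exact this

/-- If `(V, E ∪ F)` is 2-edge-connected and `F` contains two parallel links with
endpoints `x` and `y` lying in the same connected component of `(V, E)`, then removing
one copy of this link keeps the graph 2-edge-connected. -/
theorem twoEdgeConnected_erase_parallel_same_component
    {V : Type*} [Fintype V] [DecidableEq V]
    (E F : Multiset (Sym2 V))
    (hE : ∀ e ∈ E, ¬ e.IsDiag) (hF : ∀ e ∈ F, ¬ e.IsDiag)
    (x y : V) (hxy : x ≠ y) (hcount : 2 ≤ F.count s(x, y))
    (hreach : (toSimple E).Reachable x y)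
    (h2ec : KEdgeConnected (E + F) 2) :
    KEdgeConnected (E + F.erase s(x, y)) 2 := by
  have hmem : s(x, y) ∈ F := Multiset.count_pos.mp (by omega)
  refine ⟨h2ec.1, ?_⟩
  intro X hX1 hX2
  have key := h2ec.2 X hX1 hX2
  by_cases hc : ∃ u v, s(x, y) = s(u, v) ∧ u ∈ X ∧ v ∉ X
  · -- the link crosses the cut
    obtain ⟨u, v, heq, hu, hv⟩ := hc
    have hmem' : s(x, y) ∈ F.erase s(x, y) := by
      rw [← Multiset.count_pos, Multiset.count_erase_self]
      omega
    have hF1 : 1 ≤ cutDeg (F.erase s(x, y)) X := by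
      have hmem'' : s(u, v) ∈ F.erase s(x, y) := by rw [← heq]; exact hmem'
      exact one_le_cutDeg _ _ hmem'' hu hv
    have hE1 : 1 ≤ cutDeg E X := by
      rcases Sym2.eq_iff.mp heq with ⟨hxu, hyv⟩ | ⟨hxv, hyu⟩
      · subst hxu; subst hyv
        obtain ⟨u', v', he, hu', hv'⟩ := cross_of_walk E X hreach.some hu hv
        exact one_le_cutDeg _ _ he hu' hv'
      · subst hxv; subst hyu
        obtain ⟨u', v', he, hu', hv'⟩ := cross_of_walk E X hreach.symm.some hu hv
        exact one_le_cutDeg _ _ he hu' hv'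
    rw [cutDeg_add]
    omega
  · -- the link does not cross the cut: cut degree unchanged
    have hFsplit : F = s(x, y) ::ₘ F.erase s(x, y) := (Multiset.cons_erase hmem).symm
    have hsame : cutDeg F X = cutDeg (F.erase s(x, y)) X := by
      conv_lhs => rw [hFsplit]
      simp only [cutDeg, Multiset.filter_cons, if_neg hc]
      simp
    rw [cutDeg_add] at key ⊢
    omega
end

section
/- Let (V,E) be a multigraph and F a finite multiset of unordered pairs of distinct nodes of V such that (V, E ∪ F) is 2-edge-connected. Suppose F contains two parallel links e₁ and e₂, both with endpoints x and y, where x and y lie in different connected components of (V,E), and suppose F contains a further link e* (a copy distinct from e₁ and e₂) one of whose endpoints lies in the same connected component of (V,E) as x and whose other endpoint lies in the same connected component of (V,E) as y. Then (V, E ∪ (F minus one copy of e₁)) is also 2-edge-connected. -/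
open scoped Classical

private lemma two_count_le_card {α : Type*} [DecidableEq α] (S : Multiset α) {a b : α}
    (h : a ≠ b) : S.count a + S.count b ≤ Multiset.card S := by
  have hle : Multiset.replicate (S.count a) a + Multiset.replicate (S.count b) b ≤ S := by
    rw [Multiset.le_iff_count]
    intro c
    rw [Multiset.count_add, Multiset.count_replicate, Multiset.count_replicate]
    by_cases h1 : a = c
    · rw [if_pos h1]
      subst h1
      rw [if_neg (fun hbc : b = a => h hbc.symm)]
      omega
    · rw [if_neg h1]
      by_cases h2 : b = c
      · rw [if_pos h2]
        subst h2
        omega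
      · rw [if_neg h2]
        omega
  have := Multiset.card_le_card hle
  simpa using this

private lemma cutDeg_cons_pos {V : Type*} {e : Sym2 V} (S : Multiset (Sym2 V)) (X : Finset V)
    (h : ∃ u v, e = s(u, v) ∧ u ∈ X ∧ v ∉ X) :
    cutDeg (e ::ₘ S) X = cutDeg S X + 1 := by
  unfold cutDeg
  rw [Multiset.filter_cons_of_pos
      (p := fun e => ∃ u v, e = s(u, v) ∧ u ∈ X ∧ v ∉ X) _ h,
    Multiset.card_cons]

private lemma cutDeg_cons_neg {V : Type*} {e : Sym2 V} (S : Multiset (Sym2 V)) (X : Finset V)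
    (h : ¬ ∃ u v, e = s(u, v) ∧ u ∈ X ∧ v ∉ X) :
    cutDeg (e ::ₘ S) X = cutDeg S X := by
  unfold cutDeg
  rw [Multiset.filter_cons_of_neg
      (p := fun e => ∃ u v, e = s(u, v) ∧ u ∈ X ∧ v ∉ X) _ h]

private lemma count_le_cutDeg {V : Type*} [DecidableEq V] (S : Multiset (Sym2 V))
    (X : Finset V) {e : Sym2 V} (h : ∃ u v, e = s(u, v) ∧ u ∈ X ∧ v ∉ X) :
    S.count e ≤ cutDeg S X := by
  have key := Multiset.count_le_card e
    (S.filter (fun e => ∃ u v, e = s(u, v) ∧ u ∈ X ∧ v ∉ X))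
  rw [Multiset.count_filter, if_pos h] at key
  exact key

private lemma two_counts_le_cutDeg {V : Type*} [DecidableEq V] (S : Multiset (Sym2 V))
    (X : Finset V) {e f : Sym2 V} (hef : e ≠ f)
    (he : ∃ u v, e = s(u, v) ∧ u ∈ X ∧ v ∉ X)
    (hf : ∃ u v, f = s(u, v) ∧ u ∈ X ∧ v ∉ X) :
    S.count e + S.count f ≤ cutDeg S X := by
  have key := two_count_le_card
    (S.filter (fun e => ∃ u v, e = s(u, v) ∧ u ∈ X ∧ v ∉ X)) hef
  rw [Multiset.count_filter, if_pos he, Multiset.count_filter, if_pos hf] at key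
  exact key

private lemma reach_side {V : Type*} (E : Multiset (Sym2 V)) (X : Finset V)
    (hno : ∀ g ∈ E, ¬ ∃ u v, g = s(u, v) ∧ u ∈ X ∧ v ∉ X)
    {a b : V} (h : (toSimple E).Reachable a b) : a ∈ X ↔ b ∈ X := by
  obtain ⟨w⟩ := h
  induction w with
  | nil => rfl
  | cons hadj q ih =>
    rename_i u v c
    have hmem : s(u, v) ∈ E := hadj.2
    have huv : u ∈ X ↔ v ∈ X := by
      constructor
      · intro hu
        by_contra hv
        exact hno _ hmem ⟨u, v, rfl, hu, hv⟩
      · intro hv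
        by_contra hu
        exact hno _ hmem ⟨v, u, Sym2.eq_swap, hv, hu⟩
    exact huv.trans ih

/-- Suppose `(V, E ∪ F)` is 2-edge-connected, `F` contains two parallel links with
endpoints `x` and `y` lying in different connected components of `(V, E)`, and `F`
contains a further link `e*` (a copy distinct from the two parallel links) whose
endpoints lie in the components of `x` and of `y`, respectively.  Then removing one
copy of the parallel link keeps the graph 2-edge-connected. -/
theorem twoEdgeConnected_erase_parallel_diff_components
    {V : Type*} [Fintype V] [DecidableEq V]
    (E F : Multiset (Sym2 V))
    (hE : ∀ e ∈ E, ¬ e.IsDiag) (hF : ∀ e ∈ F, ¬ e.IsDiag)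
    (x y : V) (hxy : x ≠ y) (hcount : 2 ≤ F.count s(x, y))
    (hnreach : ¬ (toSimple E).Reachable x y)
    (hstar : ∃ a b : V, (toSimple E).Reachable a x ∧ (toSimple E).Reachable b y ∧
      s(a, b) ∈ (F.erase s(x, y)).erase s(x, y))
    (h2ec : KEdgeConnected (E + F) 2) :
    KEdgeConnected (E + F.erase s(x, y)) 2 := by
  obtain ⟨a, b, hax, hby, hab⟩ := hstar
  refine ⟨h2ec.1, ?_⟩
  intro X hne huniv
  have hmemF : s(x, y) ∈ F := by
    rw [← Multiset.count_pos]; omega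
  have herase : E + F.erase s(x, y) = (E + F).erase s(x, y) :=
    (Multiset.erase_add_right_pos E hmemF).symm
  have hsplit : E + F = s(x, y) ::ₘ (E + F.erase s(x, y)) := by
    rw [herase]
    exact (Multiset.cons_erase (Multiset.mem_add.mpr (Or.inr hmemF))).symm
  have h2 := h2ec.2 X hne huniv
  by_cases hcross : ∃ u v, s(x, y) = s(u, v) ∧ u ∈ X ∧ v ∉ X
  · -- the erased link crosses the cut; show the original cut degree is at least 3
    suffices h3 : 3 ≤ cutDeg (E + F) X by
      have heq : cutDeg (E + F) X = cutDeg (E + F.erase s(x, y)) X + 1 := by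
        rw [hsplit]; exact cutDeg_cons_pos _ _ hcross
      omega
    have hcnt2 : 2 ≤ (E + F).count s(x, y) := by
      rw [Multiset.count_add]; omega
    by_cases hEcross : ∃ g ∈ E, ∃ u v, g = s(u, v) ∧ u ∈ X ∧ v ∉ X
    · obtain ⟨g, hgE, hgp⟩ := hEcross
      by_cases hge : g = s(x, y)
      · have hcE : 0 < E.count s(x, y) := Multiset.count_pos.mpr (hge ▸ hgE)
        have := count_le_cutDeg (E + F) X hcross
        rw [Multiset.count_add] at this
        omega
      · have hcg : 0 < (E + F).count g :=
          Multiset.count_pos.mpr (Multiset.mem_add.mpr (Or.inl hgE))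
        have := two_counts_le_cutDeg (E + F) X (fun hxg => hge hxg.symm) hcross hgp
        omega
    · -- no E-edge crosses, so components stay on one side; use e* = s(a,b)
      have hno : ∀ g ∈ E, ¬ ∃ u v, g = s(u, v) ∧ u ∈ X ∧ v ∉ X :=
        fun g hg hp => hEcross ⟨g, hg, hp⟩
      have hside : ∀ u v : V, (toSimple E).Reachable u v → (u ∈ X ↔ v ∈ X) :=
        fun u v h => reach_side E X hno h
      obtain ⟨u, v, huv, hu, hv⟩ := hcross
      rw [Sym2.eq_iff] at huv
      have hpab : ∃ u v, s(a, b) = s(u, v) ∧ u ∈ X ∧ v ∉ X := by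
        rcases huv with ⟨hux, hvy⟩ | ⟨huy, hvx⟩
        · subst hux; subst hvy
          exact ⟨a, b, rfl, (hside a x hax).mpr hu, fun hb => hv ((hside b y hby).mp hb)⟩
        · subst huy; subst hvx
          exact ⟨b, a, Sym2.eq_swap, (hside b y hby).mpr hu,
            fun ha => hv ((hside a x hax).mp ha)⟩
      have hpxy : ∃ u v, s(x, y) = s(u, v) ∧ u ∈ X ∧ v ∉ X := by
        rcases huv with ⟨hux, hvy⟩ | ⟨huy, hvx⟩
        · subst hux; subst hvy; exact ⟨x, y, rfl, hu, hv⟩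
        · subst huy; subst hvx; exact ⟨y, x, Sym2.eq_swap, hu, hv⟩
      have habF : s(a, b) ∈ F :=
        Multiset.mem_of_mem_erase (Multiset.mem_of_mem_erase hab)
      by_cases habe : s(a, b) = s(x, y)
      · have h1 : 0 < ((F.erase s(x, y)).erase s(x, y)).count s(x, y) :=
          Multiset.count_pos.mpr (habe ▸ hab)
        rw [Multiset.count_erase_self, Multiset.count_erase_self] at h1
        have := count_le_cutDeg (E + F) X hpxy
        rw [Multiset.count_add] at this
        omega
      · have hcab : 0 < (E + F).count s(a, b) :=
          Multiset.count_pos.mpr (Multiset.mem_add.mpr (Or.inr habF))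
        have := two_counts_le_cutDeg (E + F) X (fun hxab => habe hxab.symm) hpxy hpab
        omega
  · -- the erased link does not cross the cut: the cut degree is unchanged
    have heq : cutDeg (E + F.erase s(x, y)) X = cutDeg (E + F) X := by
      rw [hsplit]; exact (cutDeg_cons_neg _ _ hcross).symm
    omega
end

section
/- Let (V,E) be a connected multigraph with |V| ≥ 2 and let X be a minimum cut, i.e., ∅ ≠ X ⊊ V and d_E(X) ≤ d_E(Y) for every Y with ∅ ≠ Y ⊊ V. Then both induced subgraphs, on X and on V \ X, are connected. -/
open scoped Classical

private lemma countP_split {α : Type*} (s : Multiset α) (p q : α → Prop)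
    [DecidablePred p] [DecidablePred q] :
    Multiset.countP (fun a => q a) s =
      Multiset.countP (fun a => q a ∧ p a) s + Multiset.countP (fun a => q a ∧ ¬ p a) s := by
  induction s using Multiset.induction_on with
  | empty => simp
  | cons a s ih =>
    simp only [Multiset.countP_cons, ih]
    by_cases hq : q a <;> by_cases hp : p a <;> simp [hq, hp] <;> omega

private lemma countP_mono {α : Type*} (s : Multiset α) (p q : α → Prop)
    [DecidablePred p] [DecidablePred q]
    (h : ∀ a ∈ s, p a → q a) :
    Multiset.countP (fun a => p a) s ≤ Multiset.countP (fun a => q a) s := by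
  have h1 : Multiset.countP (fun a => p a) s = Multiset.countP (fun a => q a ∧ p a) s :=
    Multiset.countP_congr rfl
      (fun x hx => propext ⟨fun hp => ⟨h x hx hp, hp⟩, fun h => h.2⟩)
  rw [h1, countP_split s p q]; omega

private lemma cutDeg_eq_countP {V : Type*} (Es : Multiset (Sym2 V)) (X : Finset V)
    [DecidablePred fun e : Sym2 V => ∃ u v, e = s(u, v) ∧ u ∈ X ∧ v ∉ X] :
    cutDeg Es X = Multiset.countP (fun e => ∃ u v, e = s(u, v) ∧ u ∈ X ∧ v ∉ X) Es := by
  rw [cutDeg, Multiset.countP_eq_card_filter]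
  congr!

private lemma cross_iff {V : Type*} (X : Finset V) (a b : V) :
    (∃ u v, s(a, b) = s(u, v) ∧ u ∈ X ∧ v ∉ X) ↔
      (a ∈ X ∧ b ∉ X) ∨ (b ∈ X ∧ a ∉ X) := by
  constructor
  · rintro ⟨u, v, he, hu, hv⟩
    rw [Sym2.eq_iff] at he
    rcases he with ⟨rfl, rfl⟩ | ⟨rfl, rfl⟩
    · exact Or.inl ⟨hu, hv⟩
    · exact Or.inr ⟨hu, hv⟩
  · rintro (⟨ha, hb⟩ | ⟨hb, ha⟩)
    · exact ⟨a, b, rfl, ha, hb⟩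
    · exact ⟨b, a, Sym2.eq_swap, hb, ha⟩

private lemma cutDeg_compl {V : Type*} [Fintype V] [DecidableEq V]
    (Es : Multiset (Sym2 V)) (X : Finset V) : cutDeg Es Xᶜ = cutDeg Es X := by
  rw [cutDeg_eq_countP, cutDeg_eq_countP]
  apply Multiset.countP_congr rfl
  intro e _
  apply propext
  induction e using Sym2.ind with
  | _ a b =>
    rw [cross_iff, cross_iff]
    simp only [Finset.mem_compl, not_not]
    tauto

/-- Main auxiliary lemma: one side of a minimum cut is connected. -/
private lemma side_connected {V : Type*} [Fintype V] [DecidableEq V]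
    (E : Multiset (Sym2 V)) (hE : ∀ e ∈ E, ¬ e.IsDiag)
    (hconn : (toSimple E).Connected)
    (X : Finset V) (hne : X ≠ ∅) (hnuniv : X ≠ Finset.univ)
    (hmin : ∀ Y : Finset V, Y ≠ ∅ → Y ≠ Finset.univ → cutDeg E X ≤ cutDeg E Y) :
    ((toSimple E).induce (X : Set V)).Connected := by
  set G := toSimple E with hG
  have hXne : X.Nonempty := Finset.nonempty_iff_ne_empty.2 hne
  by_contra hcon
  have hNE : Nonempty ((X : Set V) : Type _) := by
    obtain ⟨x, hx⟩ := hXne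
    exact ⟨⟨x, by simpa using hx⟩⟩
  rw [SimpleGraph.connected_iff] at hcon
  push_neg at hcon
  have hpre : ¬ (G.induce (X : Set V)).Preconnected := fun h => (hcon h).false hNE.some
  rw [SimpleGraph.Preconnected] at hpre
  push_neg at hpre
  obtain ⟨a, b, hab⟩ := hpre
  -- C : the component of a inside X
  set C : Finset V := X.filter
    (fun v => ∃ h : v ∈ (X : Set V), (G.induce (X : Set V)).Reachable a ⟨v, h⟩) with hC
  have hCsub : C ⊆ X := Finset.filter_subset _ _
  have haC : (a : V) ∈ C := by
    rw [hC, Finset.mem_filter]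
    exact ⟨by simpa using a.2, a.2, SimpleGraph.Reachable.refl a⟩
  have hbX : (b : V) ∈ X := by simpa using b.2
  have hbC : (b : V) ∉ C := by
    rw [hC, Finset.mem_filter]
    rintro ⟨_, h, hr⟩
    exact hab (by convert hr)
  -- closure : an edge from C into X stays in C
  have hclosed : ∀ u v : V, u ∈ C → v ∈ X → G.Adj u v → v ∈ C := by
    intro u v hu hv hadj
    rw [hC, Finset.mem_filter] at hu ⊢
    obtain ⟨huX, hu', hr⟩ := hu
    refine ⟨hv, by simpa using hv, ?_⟩
    exact hr.trans (SimpleGraph.Adj.reachable hadj)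
  -- edges crossing C cross X
  have hcross : ∀ e ∈ E, (∃ u v, e = s(u, v) ∧ u ∈ C ∧ v ∉ C) →
      (∃ u v, e = s(u, v) ∧ u ∈ X ∧ v ∉ X) := by
    intro e heE
    induction e using Sym2.ind with
    | _ x y =>
      rw [cross_iff, cross_iff]
      have hxy : x ≠ y := by
        intro h; exact hE _ heE (by rw [h]; exact Sym2.mk_isDiag_iff.2 rfl)
      rintro (⟨hx, hy⟩ | ⟨hy, hx⟩)
      · exact Or.inl ⟨hCsub hx, fun hyX => hy (hclosed x y hx hyX ⟨hxy, heE⟩)⟩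
      · exact Or.inr ⟨hCsub hy,
          fun hxX => hx (hclosed y x hy hxX ⟨hxy.symm, by rw [Sym2.eq_swap]; exact heE⟩)⟩
  have hCne : C ≠ ∅ := by
    intro h; rw [h] at haC; exact absurd haC (Finset.notMem_empty _)
  have hCnuniv : C ≠ Finset.univ := fun h => hbC (h ▸ Finset.mem_univ _)
  have hle : cutDeg E C ≤ cutDeg E X := by
    rw [cutDeg_eq_countP, cutDeg_eq_countP]
    exact countP_mono E _ _ hcross
  have heq : cutDeg E C = cutDeg E X := le_antisymm hle (hmin C hCne hCnuniv)
  rw [cutDeg_eq_countP, cutDeg_eq_countP] at heq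
  -- hence every edge crossing X crosses C
  have hXC : ∀ e ∈ E, (∃ u v, e = s(u, v) ∧ u ∈ X ∧ v ∉ X) →
      (∃ u v, e = s(u, v) ∧ u ∈ C ∧ v ∉ C) := by
    have hsplit := countP_split E (fun e => ∃ u v, e = s(u, v) ∧ u ∈ C ∧ v ∉ C)
      (fun e => ∃ u v, e = s(u, v) ∧ u ∈ X ∧ v ∉ X)
    have h1 : Multiset.countP
        (fun e => (∃ u v, e = s(u, v) ∧ u ∈ X ∧ v ∉ X) ∧ (∃ u v, e = s(u, v) ∧ u ∈ C ∧ v ∉ C)) E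
        = Multiset.countP (fun e => ∃ u v, e = s(u, v) ∧ u ∈ C ∧ v ∉ C) E :=
      Multiset.countP_congr rfl
        (fun e he => propext ⟨fun h => h.2, fun h => ⟨hcross e he h, h⟩⟩)
    have hzero : Multiset.countP
        (fun e => (∃ u v, e = s(u, v) ∧ u ∈ X ∧ v ∉ X) ∧
          ¬ (∃ u v, e = s(u, v) ∧ u ∈ C ∧ v ∉ C)) E = 0 := by
      omega
    rw [Multiset.countP_eq_zero] at hzero
    intro e he hx
    by_contra hc
    exact hzero e he ⟨hx, hc⟩
  -- S := X \ C is closed under adjacency in G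
  set S : Finset V := X \ C with hS
  have hSclosed : ∀ u v : V, u ∈ S → G.Adj u v → v ∈ S := by
    intro u v hu hadj
    rw [hS, Finset.mem_sdiff] at hu ⊢
    obtain ⟨huX, huC⟩ := hu
    by_cases hvX : v ∈ X
    · exact ⟨hvX, fun hvC => huC (hclosed v u hvC huX hadj.symm)⟩
    · exfalso
      obtain ⟨u', v', he, hu', hv'⟩ := hXC s(u, v) hadj.2 ⟨u, v, rfl, huX, hvX⟩
      rw [Sym2.eq_iff] at he
      rcases he with ⟨rfl, rfl⟩ | ⟨rfl, rfl⟩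
      · exact huC hu'
      · exact hvX (hCsub hu')
  have hreach : ∀ u v : V, G.Reachable u v → u ∈ S → v ∈ S := by
    intro u v hr hu
    obtain ⟨w⟩ := hr
    induction w with
    | nil => exact hu
    | cons hadj p ih => exact ih (hSclosed _ _ hu hadj)
  have hbS : (b : V) ∈ S := Finset.mem_sdiff.2 ⟨hbX, hbC⟩
  have haS : (a : V) ∈ S := hreach _ _ (hconn.preconnected b a) hbS
  rw [hS, Finset.mem_sdiff] at haS
  exact haS.2 haC

/-- Let `(V, E)` be a connected multigraph with `|V| ≥ 2` and `X` a minimum cut.  Then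
both induced subgraphs, on `X` and on `V \ X`, are connected. -/
theorem minCut_sides_connected {V : Type*} [Fintype V] [DecidableEq V]
    (E : Multiset (Sym2 V)) (hE : ∀ e ∈ E, ¬ e.IsDiag)
    (hV : 2 ≤ Fintype.card V) (hconn : (toSimple E).Connected)
    (X : Finset V) (hne : X ≠ ∅) (hnuniv : X ≠ Finset.univ)
    (hmin : ∀ Y : Finset V, Y ≠ ∅ → Y ≠ Finset.univ → cutDeg E X ≤ cutDeg E Y) :
    ((toSimple E).induce (X : Set V)).Connected ∧
      ((toSimple E).induce ((Xᶜ : Finset V) : Set V)).Connected := by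
  refine ⟨side_connected E hE hconn X hne hnuniv hmin, ?_⟩
  have h1 : (Xᶜ : Finset V) ≠ ∅ := by
    intro h
    exact hnuniv (by simpa using congrArg compl h)
  have h2 : (Xᶜ : Finset V) ≠ Finset.univ := by
    intro h
    exact hne (by simpa using congrArg compl h)
  exact side_connected E hE hconn Xᶜ h1 h2
    (fun Y hY1 hY2 => by rw [cutDeg_compl]; exact hmin Y hY1 hY2)
end
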